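/- Suppose every round of a core-language algorithm has a uni instruction. If round i is preserving with respect to a phase predicate ψ, then {b,?} ⊆ fire_i(bias(θ), ψ) for all sufficiently large θ < 1, and {a,?} ⊆ fire_i(bias(θ), ψ) for all sufficiently small θ > 0. -/

import Mathlib

open Classical

namespace HO

/-! ### Values

`none` is the undefined value `?`; defined values are natural numbers, where
`some 0` plays the role of `a` and `some 1` the role of `b` (so `a < b`). -/

abbrev Val := Option ℕ

def aVal : ℕ := 0
def bVal : ℕ := 1

/-! ### Operations -/

inductive Op where
  | min : Op
  | smor : Op

/-- Minimum of a multiset of defined values (`none` if the multiset is empty). -/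
noncomputable def msMin (S : Multiset ℕ) : Option ℕ :=
  if h : S.toFinset.Nonempty then some (S.toFinset.min' h) else none

/-- Smallest most frequent value of a multiset (`none` if the multiset is empty). -/
noncomputable def msSmor (S : Multiset ℕ) : Option ℕ :=
  if h : (S.toFinset.filter fun v => ∀ w ∈ S.toFinset, S.count w ≤ S.count v).Nonempty
  then some ((S.toFinset.filter fun v => ∀ w ∈ S.toFinset, S.count w ≤ S.count v).min' h)
  else none

noncomputable def Op.apply : Op → Multiset ℕ → Option ℕ
  | Op.min, S => msMin S
  | Op.smor, S => msSmor S

/-! ### Rounds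

A round consists of at most one `uni` instruction followed by a list of `mult`
instructions with non-increasing thresholds, all thresholds lying in `[0,1)`. -/

structure Round where
  uniThr : Option ℝ
  mults : List (ℝ × Op)
  wfU : ∀ t ∈ uniThr, 0 ≤ t ∧ t < 1
  wfM : ∀ q ∈ mults, 0 ≤ q.1 ∧ q.1 < 1
  sorted : (mults.map Prod.fst).Chain' (· ≥ ·)

def Round.hasUni (R : Round) : Prop := R.uniThr.isSome = true
def Round.hasMult (R : Round) : Prop := R.mults ≠ []

/-- `thr_u^i`: the threshold of the uni instruction, `-1` if absent. -/
noncomputable def Round.thrU (R : Round) : ℝ := R.uniThr.getD (-1)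

noncomputable def minThr : List ℝ → ℝ
  | [] => -1
  | [t] => t
  | t :: ts => min t (minThr ts)

/-- `thr_m^{i,k}`: the smallest threshold of a mult instruction, `-1` if absent. -/
noncomputable def Round.thrM (R : Round) : ℝ := minThr (R.mults.map Prod.fst)

/-- Result of the first applicable `mult` instruction. -/
noncomputable def firstMult (n : ℕ) (S : Multiset ℕ) : List (ℝ × Op) → Option ℕ
  | [] => none
  | (t, op) :: rest =>
      if 1 < S.toFinset.card ∧ t * n < (S.card : ℝ) then op.apply S
      else firstMult n S rest

/-- `update_i(H)`: the result of the first instruction of the round whose condition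
is satisfied by `H − {?}`, and `?` (i.e. `none`) if no condition applies. -/
noncomputable def Round.update (R : Round) (n : ℕ) (H : Multiset Val) : Option ℕ :=
  if ∃ t ∈ R.uniThr,
      (H.filterMap id).toFinset.card = 1 ∧ t * n < ((H.filterMap id).card : ℝ)
  then msMin (H.filterMap id)
  else firstMult n (H.filterMap id) R.mults

/-! ### Communication predicates for a round -/

/-- A conjunction of atomic communication predicates for one round: possibly
`φ_=` (field `eq`) and possibly `φ_thr` (field `thr`, with `0 ≤ thr < 1`). -/
structure RoundPred where
  eq : Bool
  thr : Option ℝ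
  wf : ∀ t ∈ thr, 0 ≤ t ∧ t < 1

/-- `thr_i(ψ)`: the threshold appearing in the predicate, `-1` if absent. -/
noncomputable def RoundPred.thrVal (φ : RoundPred) : ℝ := φ.thr.getD (-1)

def RoundPred.isEqualizer (φ : RoundPred) : Prop := φ.eq = true

/-- Satisfaction of a round predicate by a tuple of heard-of multisets. -/
def RoundPred.sat {α : Type} (φ : RoundPred) (n : ℕ) (Hs : Fin n → Multiset α) : Prop :=
  (φ.eq = true → ∀ p q, Hs p = Hs q) ∧
  ∀ t ∈ φ.thr, ∀ p, t * n < ((Hs p).card : ℝ)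

/-- Logical implication between round predicates. -/
def RoundPred.implies (φ φ' : RoundPred) : Prop :=
  ∀ (α : Type) (n : ℕ) (Hs : Fin n → Multiset α), φ.sat n Hs → φ'.sat n Hs

/-! ### Tuples of values -/

/-- The multiset of values of a tuple. -/
def msetOf {n : ℕ} (f : Fin n → Val) : Multiset Val := Finset.univ.val.map f

def soloB (n : ℕ) : Fin n → Val := fun _ => some bVal
def soloA (n : ℕ) : Fin n → Val := fun _ => some aVal
def soloQ (n : ℕ) : Fin n → Val := fun _ => none

/-- `bias(θ)`: a tuple over `{a,b}` with `θ·n` entries equal to `b`. -/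
def isBias {n : ℕ} (θ : ℝ) (f : Fin n → Val) : Prop :=
  (∀ p, f p = some aVal ∨ f p = some bVal) ∧
  ((Finset.univ.filter fun p => f p = some bVal).card : ℝ) = θ * n

/-- `spread = bias(1/2)`. -/
def isSpread {n : ℕ} (f : Fin n → Val) : Prop := isBias (1/2) f

/-- `bias^?(θ)`: a tuple over `{?,b}` with `θ·n` entries equal to `b`. -/
def isBiasQ {n : ℕ} (θ : ℝ) (f : Fin n → Val) : Prop :=
  (∀ p, f p = none ∨ f p = some bVal) ∧
  ((Finset.univ.filter fun p => f p = some bVal).card : ℝ) = θ * n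

/-- `bias_a^?(θ)`: a tuple over `{?,a}` with `θ·n` entries equal to `a`. -/
def isBiasQa {n : ℕ} (θ : ℝ) (f : Fin n → Val) : Prop :=
  (∀ p, f p = none ∨ f p = some aVal) ∧
  ((Finset.univ.filter fun p => f p = some aVal).card : ℝ) = θ * n

/-! ### Round transitions -/

/-- Round transition `f →[φ]_i f'`: every process receives a sub-multiset of the
multiset of sent values, the tuple of heard-of multisets jointly satisfies `φ`,
and every process updates its variable accordingly. -/
def roundTrans (R : Round) (φ : RoundPred) {n : ℕ} (f f' : Fin n → Val) : Prop :=
  ∃ Hs : Fin n → Multiset Val,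
    (∀ p, Hs p ≤ msetOf f) ∧ φ.sat n Hs ∧ ∀ p, f' p = R.update n (Hs p)

/-- `d ∈ fire_i(f,φ)`. -/
def fire (R : Round) (φ : RoundPred) {n : ℕ} (f : Fin n → Val) (d : Val) : Prop :=
  ∃ f' : Fin n → Val, roundTrans R φ f f' ∧ ∃ p, f' p = d

/-! ### Algorithms -/

/-- An algorithm of the core language: rounds `1,…,r` (`r ≥ 2`), with a designated
input-update round `ir` (`1 ≤ ir < r`). -/
structure Algo where
  r : ℕ
  rounds : ℕ → Round
  ir : ℕ
  two_le_r : 2 ≤ r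
  one_le_ir : 1 ≤ ir
  ir_lt_r : ir < r

noncomputable def Algo.thrU (A : Algo) (i : ℕ) : ℝ := (A.rounds i).thrU
noncomputable def Algo.thrM (A : Algo) (i : ℕ) : ℝ := (A.rounds i).thrM
def Algo.hasUni (A : Algo) (i : ℕ) : Prop := (A.rounds i).hasUni
def Algo.hasMult (A : Algo) (i : ℕ) : Prop := (A.rounds i).hasMult

/-- A phase predicate: a conjunction of atomic predicates for every round. -/
abbrev PhasePred := ℕ → RoundPred

/-- Phase transition `(f,d) →ψ (f',d')`. -/
def phaseTrans (A : Algo) (ψ : PhasePred) {n : ℕ} (f d f' d' : Fin n → Val) : Prop :=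
  ∃ g : ℕ → Fin n → Val,
    g 0 = f ∧
    (∀ i, 1 ≤ i → i ≤ A.r → roundTrans (A.rounds i) (ψ i) (g (i - 1)) (g i)) ∧
    (∀ p, f' p = if g A.ir p = none then f p else g A.ir p) ∧
    (∀ p, d' p = if d p = none then g A.r p else d p)

/-- A chain of round transitions for rounds `k,…,l`. -/
def roundChain (A : Algo) (ψ : PhasePred) (k l : ℕ) {n : ℕ} (f f' : Fin n → Val) : Prop :=
  ∃ g : ℕ → Fin n → Val,
    g (k - 1) = f ∧ g l = f' ∧
    ∀ i, k ≤ i → i ≤ l → roundTrans (A.rounds i) (ψ i) (g (i - 1)) (g i)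

/-! ### Syntactic notions -/

/-- Round `i` is preserving w.r.t. `ψ`. -/
def Algo.preserving (A : Algo) (ψ : PhasePred) (i : ℕ) : Prop :=
  ¬ A.hasUni i ∨ ¬ A.hasMult i ∨ (ψ i).thrVal < max (A.thrU i) (A.thrM i)

/-- Round `i` is solo-safe w.r.t. `ψ`. -/
def Algo.soloSafe (A : Algo) (ψ : PhasePred) (i : ℕ) : Prop :=
  0 ≤ A.thrU i ∧ A.thrU i ≤ (ψ i).thrVal

/-- The border threshold `thr̄ = max(1 − thr_u^1, 1 − thr_m^{1,k}/2)`. -/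
noncomputable def Algo.borderThr (A : Algo) : ℝ :=
  max (1 - A.thrU 1) (1 - A.thrM 1 / 2)

/-- `ψ` is a decider: all rounds are solo-safe w.r.t. `ψ`. -/
def Algo.decider (A : Algo) (ψ : PhasePred) : Prop :=
  ∀ i, 1 ≤ i → i ≤ A.r → A.soloSafe ψ i

/-- `ψ` is a unifier. -/
def Algo.unifier (A : Algo) (ψ : PhasePred) : Prop :=
  A.thrM 1 ≤ (ψ 1).thrVal ∧
  (A.thrU 1 ≤ (ψ 1).thrVal ∨ A.borderThr ≤ (ψ 1).thrVal) ∧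
  ∃ i, 1 ≤ i ∧ i ≤ A.ir ∧ (ψ i).isEqualizer ∧
    (∀ j, 2 ≤ j → j ≤ i → ¬ A.preserving ψ j) ∧
    (∀ j, i < j → j ≤ A.ir → A.soloSafe ψ j)

/-- The algorithm is syntactically safe. -/
def Algo.syntSafe (A : Algo) : Prop :=
  A.hasMult 1 ∧
  (∀ i, 1 ≤ i → i ≤ A.r → A.hasUni i) ∧
  (∀ q ∈ (A.rounds 1).mults, q.2 = Op.smor) ∧
  1 - A.thrU (A.ir + 1) ≤ A.thrM 1 / 2 ∧
  1 - A.thrU (A.ir + 1) ≤ A.thrU 1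

/-- Assumption (A) relative to the global predicate `gl`. -/
def Algo.assumptionA (A : Algo) (gl : PhasePred) : Prop :=
  ∀ i, 1 ≤ i → i ≤ A.r →
    (∀ j, 1 ≤ j → j < i → ¬ A.preserving gl j) →
    (A.hasUni i → (gl i).thrVal ≤ A.thrU i) ∧
    (A.hasMult i → (gl i).thrVal ≤ A.thrM i)

/-- Proviso (P): the global predicate has no equalizer and round `ir+1` has no
mult instruction. -/
def Algo.provisoP (A : Algo) (gl : PhasePred) : Prop :=
  (∀ i, 1 ≤ i → i ≤ A.r → ¬ (gl i).isEqualizer) ∧ ¬ A.hasMult (A.ir + 1)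

/-- Removing all mult instructions of a round. -/
def Round.dropMults (R : Round) : Round :=
  { uniThr := R.uniThr, mults := [], wfU := R.wfU,
    wfM := by simp, sorted := by first | exact List.IsChain.nil | simp [List.Chain'] | constructor }

/-- Removing all mult instructions of round `i` of an algorithm. -/
def Algo.dropMultsAt (A : Algo) (i : ℕ) : Algo :=
  { A with rounds := fun j => if j = i then (A.rounds j).dropMults else A.rounds j }

/-! ### Communication predicates, executions, consensus -/

/-- A communication predicate `(G ψ̄) ∧ F(ψ^1 ∧ F(ψ^2 ∧ … ∧ F ψ^k))`:
a global phase predicate and sporadic phase predicates `ψ^1,…,ψ^k`. -/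
structure CommPred where
  glob : PhasePred
  k : ℕ
  spor : ℕ → PhasePred

/-- Roundwise implication between phase predicates of an algorithm. -/
def predImplies (A : Algo) (ψ ψ' : PhasePred) : Prop :=
  ∀ i, 1 ≤ i → i ≤ A.r → (ψ i).implies (ψ' i)

/-- An execution of an algorithm respecting a communication predicate: an infinite
sequence of phase transitions under the global predicate, together with an
increasing sequence of times at which the sporadic predicates hold. -/
structure Exec (A : Algo) (C : CommPred) (n : ℕ) where
  inp : ℕ → Fin n → Val
  dec : ℕ → Fin n → Val
  inp0 : ∀ p, inp 0 p ≠ none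
  dec0 : ∀ p, dec 0 p = none
  step : ∀ s, phaseTrans A C.glob (inp s) (dec s) (inp (s + 1)) (dec (s + 1))
  sporTime : ℕ → ℕ
  mono : StrictMono sporTime
  sporStep : ∀ i, 1 ≤ i → i ≤ C.k →
    phaseTrans A (C.spor i) (inp (sporTime i)) (dec (sporTime i))
      (inp (sporTime i + 1)) (dec (sporTime i + 1))

/-- Agreement: in every reachable state, any two non-`?` decision values coincide. -/
def Agreement (A : Algo) (C : CommPred) : Prop :=
  ∀ n, 0 < n → ∀ E : Exec A C n, ∀ s p q v w,
    E.dec s p = some v → E.dec s q = some w → v = w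

/-- Termination: every execution reaches a state where all processes have decided. -/
def Termination (A : Algo) (C : CommPred) : Prop :=
  ∀ n, 0 < n → ∀ E : Exec A C n, ∃ s, ∀ p, E.dec s p ≠ none

/-- Solving consensus: agreement and termination. -/
def SolvesConsensus (A : Algo) (C : CommPred) : Prop :=
  Agreement A C ∧ Termination A C

/-! ### Auxiliary lemmas -/

lemma firstMult_none (n : ℕ) (S : Multiset ℕ) (L : List (ℝ × Op))
    (h : ∀ q ∈ L, ¬(1 < S.toFinset.card ∧ q.1 * n < (S.card : ℝ))) :
    firstMult n S L = none := by
  induction L with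
  | nil => rfl
  | cons q L ih =>
    rw [firstMult, if_neg (h q List.mem_cons_self)]
    exact ih fun q hq => h q (List.mem_cons_of_mem _ hq)

lemma minThr_le {L : List ℝ} {t : ℝ} (h : t ∈ L) : minThr L ≤ t := by
  induction L with
  | nil => simp at h
  | cons s L ih =>
    cases L with
    | nil => simp at h; simp [minThr, h]
    | cons s' L' =>
      rcases List.mem_cons.mp h with h | h
      · subst h; exact min_le_left _ _
      · exact le_trans (min_le_right _ _) (ih h)

lemma filterMap_id_replicate (m : ℕ) (x : ℕ) :
    (Multiset.replicate m (some x : Val)).filterMap id = Multiset.replicate m x := by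
  induction m with
  | zero => rfl
  | succ m ih =>
    rw [Multiset.replicate_succ, Multiset.replicate_succ,
      Multiset.filterMap_cons_some id _ _ rfl, ih]

lemma msMin_replicate (m x : ℕ) (hm : 1 ≤ m) :
    msMin (Multiset.replicate m x) = some x := by
  rw [msMin, Multiset.toFinset_replicate, if_neg (by omega)]
  simp

lemma update_replicate_fire (R : Round) {u : ℝ} (hu : R.uniThr = some u)
    (n m x : ℕ) (hm : 1 ≤ m) (hcond : u * n < (m : ℝ)) :
    R.update n (Multiset.replicate m (some x)) = some x := by
  rw [Round.update, filterMap_id_replicate, if_pos, msMin_replicate m x hm]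
  refine ⟨u, by simp [hu], ?_, by simpa using hcond⟩
  rw [Multiset.toFinset_replicate, if_neg (by omega)]
  simp

lemma update_replicate_none (R : Round) (n m x : ℕ)
    (hm : ∀ t ∈ R.uniThr, ¬ (t * n < (m : ℝ))) :
    R.update n (Multiset.replicate m (some x)) = none := by
  rw [Round.update, filterMap_id_replicate, if_neg, firstMult_none]
  · rintro q hq ⟨h1, -⟩
    rw [Multiset.toFinset_replicate] at h1
    split_ifs at h1 <;> simp at h1
  · rintro ⟨t, ht, hcard, hlt⟩
    rw [Multiset.card_replicate] at hlt
    exact hm t ht hlt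

lemma update_two_none (R : Round) (n : ℕ) (H : Multiset Val)
    (h2 : 1 < (H.filterMap id).toFinset.card)
    (hM : ∀ q ∈ R.mults, ¬ ((q.1 * n) < ((H.filterMap id).card : ℝ))) :
    R.update n H = none := by
  rw [Round.update, if_neg, firstMult_none]
  · rintro q hq ⟨-, hlt⟩; exact hM q hq hlt
  · rintro ⟨t, ht, hcard, -⟩; omega

lemma fire_const (R : Round) (φ : RoundPred) {n : ℕ} (hn : 0 < n) (f : Fin n → Val)
    (H : Multiset Val) (hle : H ≤ msetOf f)
    (hthr : ∀ t ∈ φ.thr, t * n < (Multiset.card H : ℝ)) (d : Val)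
    (hupd : R.update n H = d) : fire R φ f d :=
  ⟨fun _ => d, ⟨fun _ => H, fun _ => hle, ⟨fun _ _ _ => rfl, fun t ht _ => hthr t ht⟩,
    fun _ => hupd.symm⟩, ⟨⟨0, hn⟩, rfl⟩⟩

lemma count_msetOf {n : ℕ} (f : Fin n → Val) (x : Val) :
    (msetOf f).count x = (Finset.univ.filter fun p => f p = x).card := by
  rw [msetOf, Multiset.count_map, Finset.card_def, Finset.filter_val]
  refine congrArg Multiset.card (Multiset.filter_congr ?_)
  intro a _
  exact eq_comm

lemma card_msetOf {n : ℕ} (f : Fin n → Val) : Multiset.card (msetOf f) = n := by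
  simp [msetOf]

lemma mem_filterMap_id {H : Multiset Val} {x : ℕ} :
    x ∈ H.filterMap id ↔ (some x : Val) ∈ H := by
  simp [Multiset.mem_filterMap]

/-- Core construction: fires `some v` and `none` under numeric hypotheses. -/
lemma fires_core (R : Round) {u : ℝ} (hu : R.uniThr = some u) (hu0 : 0 ≤ u)
    (φ : RoundPred) {n : ℕ} (hn : 0 < n) (f : Fin n → Val)
    (v w : ℕ) (hvw : v ≠ w)
    (kv kw : ℕ)
    (hkv : (msetOf f).count (some v) = kv)
    (hkw : (msetOf f).count (some w) = kw)
    (hkw1 : 1 ≤ kw)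
    (hUv : u * n < (kv : ℝ))
    (hψv : ∀ t ∈ φ.thr, t * n < (kv : ℝ))
    (hMv : R.thrM * n ≤ (kv : ℝ))
    (hnone : R.mults = [] ∨ φ.thr = none ∨
       (∃ t, φ.thr = some t ∧ 0 ≤ t ∧
         ((t * n + 1 ≤ u * n) ∨ (t * n + 2 ≤ R.thrM * n)))) :
    fire R φ f (some v) ∧ fire R φ f none := by
  have hkv1 : 1 ≤ kv := by
    by_contra h
    have : (kv : ℝ) ≤ 0 := by
      have : kv = 0 := by omega
      simp [this]
    nlinarith [mul_nonneg hu0 (Nat.cast_nonneg n)]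
  constructor
  · -- fire (some v) : all-v heard-of set of size kv
    refine fire_const R φ hn f (Multiset.replicate kv (some v)) ?_ ?_ _
      (update_replicate_fire R hu n kv v hkv1 (by simpa using hUv))
    · rw [← Multiset.le_count_iff_replicate_le, hkv]
    · intro t ht; rw [Multiset.card_replicate]; exact hψv t ht
  · -- fire none
    rcases hnone with hM | hT | ⟨t, hT, ht0, hc⟩
    · -- no mult instruction: full multiset, two distinct values present
      refine fire_const R φ hn f (msetOf f) le_rfl ?_ none (update_two_none R n _ ?_ ?_)
      · intro t ht
        rw [card_msetOf]
        have h1 : (kv : ℝ) ≤ (n : ℝ) := by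
          exact_mod_cast hkv ▸ Multiset.count_le_card _ _ |>.trans_eq (card_msetOf f)
        exact lt_of_lt_of_le (hψv t ht) h1
      · rw [Finset.one_lt_card]
        refine ⟨v, ?_, w, ?_, hvw⟩ <;> rw [Multiset.mem_toFinset, mem_filterMap_id,
          ← Multiset.count_pos] <;> omega
      · simp [hM]
    · -- no threshold in φ : empty heard-of set
      refine fire_const R φ hn f 0 (Multiset.zero_le _) (by simp [hT]) none ?_
      have := update_replicate_none R n 0 v (by
        intro t htu hlt
        rw [hu, Option.mem_def, Option.some_inj] at htu
        subst htu
        have : (0:ℝ) ≤ u * n := mul_nonneg hu0 (Nat.cast_nonneg n)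
        simp at hlt; linarith)
      simpa using this
    rcases hc with hc | hc
    · -- t < u : one-value set of size ⌊u·n⌋, uni threshold not reached
      set m : ℕ := ⌊u * n⌋₊ with hm
      have hun0 : 0 ≤ u * n := mul_nonneg hu0 (Nat.cast_nonneg n)
      have hmle : (m : ℝ) ≤ u * n := Nat.floor_le hun0
      have hmgt : u * n < (m : ℝ) + 1 := Nat.lt_floor_add_one _
      have htm : t * n < (m : ℝ) := by linarith
      have hm1 : 1 ≤ m := by
        by_contra h
        have h0 : m = 0 := by omega
        rw [h0] at htm
        push_cast at htm
        nlinarith [mul_nonneg ht0 (Nat.cast_nonneg (α := ℝ) n)]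
      have hmkv : m ≤ kv := by
        have h : (m : ℝ) < kv := lt_of_le_of_lt hmle hUv
        exact_mod_cast h.le
      refine fire_const R φ hn f (Multiset.replicate m (some v)) ?_ ?_ none ?_
      · rw [← Multiset.le_count_iff_replicate_le, hkv]; exact hmkv
      · intro t' ht'
        rw [hT, Option.mem_def, Option.some_inj] at ht'
        subst ht'
        rw [Multiset.card_replicate]; exact htm
      · refine update_replicate_none R n m v ?_
        intro t' ht' hlt
        rw [hu, Option.mem_def, Option.some_inj] at ht'
        subst ht'
        linarith
    · -- t < thrM : two-value set of size ⌊thrM·n⌋, mult thresholds not reached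
      set m : ℕ := ⌊R.thrM * n⌋₊ with hm
      have htn0 : 0 ≤ t * n := mul_nonneg ht0 (Nat.cast_nonneg n)
      have hMn0 : 0 ≤ R.thrM * n := by linarith
      have hmle : (m : ℝ) ≤ R.thrM * n := Nat.floor_le hMn0
      have hmgt : R.thrM * n < (m : ℝ) + 1 := Nat.lt_floor_add_one _
      have htm : t * n + 1 < (m : ℝ) := by linarith
      have hm2 : 2 ≤ m := by
        by_contra h
        have h1 : (m : ℝ) ≤ 1 := by exact_mod_cast (by omega : m ≤ 1)
        linarith
      have hmkv : m ≤ kv := by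
        have : (m : ℝ) ≤ kv := le_trans hmle hMv
        exact_mod_cast this
      set H : Multiset Val := (some w) ::ₘ Multiset.replicate (m - 1) (some v) with hH
      have hfm : H.filterMap id = w ::ₘ Multiset.replicate (m - 1) v := by
        rw [hH, Multiset.filterMap_cons_some id _ _ rfl, filterMap_id_replicate]
      have hcardH : Multiset.card H = m := by
        rw [hH]; simp; omega
      refine fire_const R φ hn f H ?_ ?_ none (update_two_none R n H ?_ ?_)
      · rw [Multiset.le_iff_count]
        intro x
        rw [hH]
        rcases eq_or_ne x (some w) with rfl | hxw
        · rw [Multiset.count_cons_self, Multiset.count_replicate,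
            if_neg (by simp [hvw]), hkw]
          omega
        rcases eq_or_ne x (some v) with rfl | hxv
        · rw [Multiset.count_cons_of_ne hxw, Multiset.count_replicate, if_pos rfl, hkv]
          omega
        · rw [Multiset.count_cons_of_ne hxw, Multiset.count_replicate, if_neg (Ne.symm hxv)]
          exact Nat.zero_le _
      · intro t' ht'
        rw [hT, Option.mem_def, Option.some_inj] at ht'
        subst ht'
        rw [hcardH]
        linarith
      · rw [hfm]
        have hmem : v ∈ (w ::ₘ Multiset.replicate (m - 1) v) := by
          apply Multiset.mem_cons_of_mem
          exact Multiset.mem_replicate.mpr ⟨by omega, rfl⟩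
        rw [Finset.one_lt_card]
        exact ⟨w, by simp, v, Multiset.mem_toFinset.mpr hmem, hvw.symm⟩
      · intro q hq hlt
        rw [hfm] at hlt
        have hcard : Multiset.card (w ::ₘ Multiset.replicate (m - 1) v) = m := by
          simp; omega
        rw [hcard] at hlt
        have hq1 : R.thrM ≤ q.1 := minThr_le (List.mem_map.mpr ⟨q, hq, rfl⟩)
        have : R.thrM * n ≤ q.1 * n := by nlinarith [Nat.cast_nonneg (α := ℝ) n]
        linarith

lemma thrM_lt_one (R : Round) : R.thrM < 1 := by
  rcases h : R.mults with - | ⟨q, L⟩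
  · rw [Round.thrM, h]
    show minThr [] < 1
    rw [minThr]; norm_num
  · have hq : q ∈ R.mults := by rw [h]; exact List.mem_cons_self
    have h2 := (R.wfM q hq).2
    have hle : R.thrM ≤ q.1 := minThr_le (List.mem_map.mpr ⟨q, hq, rfl⟩)
    linarith

lemma thrVal_lt_one (φ : RoundPred) : φ.thrVal < 1 := by
  rcases h : φ.thr with - | t
  · rw [RoundPred.thrVal, h]; norm_num
  · have h2 := (φ.wf t (by simp [h])).2
    rw [RoundPred.thrVal, h]; simpa using h2

set_option maxHeartbeats 2000000 in
/-- Lemma 5.  Suppose every round has a uni instruction.  If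
round `i` is preserving w.r.t. `ψ` then `{b,?} ⊆ fire_i(bias(θ),ψ)` for all
sufficiently large `θ < 1`, and `{a,?} ⊆ fire_i(bias(θ),ψ)` for all
sufficiently small `θ > 0` (for all sufficiently large `n`). -/
theorem preserving_fires_b_and_undef (A : Algo)
    (huni : ∀ j, 1 ≤ j → j ≤ A.r → A.hasUni j)
    (ψ : PhasePred) (i : ℕ) (hi : 1 ≤ i) (hir : i ≤ A.r)
    (hp : A.preserving ψ i) :
    (∃ θ₀ : ℝ, θ₀ < 1 ∧ ∀ θ : ℝ, θ₀ ≤ θ → θ < 1 →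
      ∃ n₀ : ℕ, ∀ n : ℕ, n₀ ≤ n → ∀ f : Fin n → Val, isBias θ f →
        fire (A.rounds i) (ψ i) f (some bVal) ∧
        fire (A.rounds i) (ψ i) f none) ∧
    (∃ θ₁ : ℝ, 0 < θ₁ ∧ ∀ θ : ℝ, 0 < θ → θ ≤ θ₁ →
      ∃ n₀ : ℕ, ∀ n : ℕ, n₀ ≤ n → ∀ f : Fin n → Val, isBias θ f →
        fire (A.rounds i) (ψ i) f (some aVal) ∧
        fire (A.rounds i) (ψ i) f none) := by
  have hUni : (A.rounds i).hasUni := huni i hi hir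
  obtain ⟨u, hu⟩ := Option.isSome_iff_exists.mp hUni
  have hu01 := (A.rounds i).wfU u (by simp [hu])
  have hthrU : A.thrU i = u := by simp [Algo.thrU, Round.thrU, hu]
  have hp' : (A.rounds i).mults = [] ∨ (ψ i).thrVal < max u (A.rounds i).thrM := by
    rcases hp with h | h | h
    · exact absurd hUni h
    · exact Or.inl (not_ne_iff.mp h)
    · right; rw [hthrU] at h; exact h
  have hM1 : (A.rounds i).thrM < 1 := thrM_lt_one _
  have hV1 : (ψ i).thrVal < 1 := thrVal_lt_one _
  set c : ℝ := max u (max (A.rounds i).thrM (ψ i).thrVal) with hc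
  have hc0 : 0 ≤ c := le_trans hu01.1 (le_max_left _ _)
  have hc1 : c < 1 := by
    rw [hc]; exact max_lt hu01.2 (max_lt hM1 hV1)
  have hcu : u ≤ c := le_max_left _ _
  have hcM : (A.rounds i).thrM ≤ c := le_trans (le_max_left _ _) (le_max_right _ _)
  have hcV : (ψ i).thrVal ≤ c := le_trans (le_max_right _ _) (le_max_right _ _)
  -- the choice of `n₀`, independent of `θ`
  have key : ∃ n₀ : ℕ, 1 ≤ n₀ ∧ ∀ n : ℕ, n₀ ≤ n →
      (A.rounds i).mults = [] ∨ (ψ i).thr = none ∨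
      ∃ t, (ψ i).thr = some t ∧ 0 ≤ t ∧
        (t * n + 1 ≤ u * n ∨ t * n + 2 ≤ (A.rounds i).thrM * n) := by
    rcases hp' with h | hlt
    · exact ⟨1, le_rfl, fun n _ => Or.inl h⟩
    rcases hT : (ψ i).thr with - | t
    · exact ⟨1, le_rfl, fun n _ => Or.inr (Or.inl rfl)⟩
    have ht01 := (ψ i).wf t (by simp [hT])
    have htv : (ψ i).thrVal = t := by rw [RoundPred.thrVal, hT]; rfl
    rw [htv] at hlt
    rcases lt_max_iff.mp hlt with htu | htM
    · have hpos : 0 < u - t := by linarith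
      refine ⟨max 1 ⌈1 / (u - t)⌉₊, le_max_left _ _, fun n hn => Or.inr (Or.inr ⟨t, rfl, ht01.1, Or.inl ?_⟩)⟩
      have h1 : (⌈1 / (u - t)⌉₊ : ℝ) ≤ n := by
        exact_mod_cast le_trans (le_max_right 1 _) hn
      have h2 : 1 / (u - t) ≤ (n : ℝ) := le_trans (Nat.le_ceil _) h1
      have h3 : 1 ≤ (n : ℝ) * (u - t) := (div_le_iff₀ hpos).mp h2
      nlinarith
    · have hpos : 0 < (A.rounds i).thrM - t := by linarith
      refine ⟨max 1 ⌈2 / ((A.rounds i).thrM - t)⌉₊, le_max_left _ _, fun n hn => Or.inr (Or.inr ⟨t, rfl, ht01.1, Or.inr ?_⟩)⟩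
      have h1 : (⌈2 / ((A.rounds i).thrM - t)⌉₊ : ℝ) ≤ n := by
        exact_mod_cast le_trans (le_max_right 1 _) hn
      have h2 : 2 / ((A.rounds i).thrM - t) ≤ (n : ℝ) := le_trans (Nat.le_ceil _) h1
      have h3 : 2 ≤ (n : ℝ) * ((A.rounds i).thrM - t) := (div_le_iff₀ hpos).mp h2
      nlinarith
  obtain ⟨n₀, hn₀1, hkey⟩ := key
  have habne : (some bVal : Val) ≠ some aVal := by simp [aVal, bVal]
  constructor
  · -- b side
    refine ⟨(c + 1) / 2, by linarith, fun θ hθl hθ1 => ⟨n₀, fun n hn f hf => ?_⟩⟩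
    have hcθ : c < θ := by linarith
    have hθ0 : 0 < θ := by linarith
    obtain ⟨hab, hcard⟩ := hf
    have hn' : 0 < n := lt_of_lt_of_le hn₀1 hn
    have hnR : (0 : ℝ) < n := by exact_mod_cast hn'
    set k : ℕ := (Finset.univ.filter fun p => f p = some bVal).card with hk
    have hsplit := Finset.card_filter_add_card_filter_not
      (s := (Finset.univ : Finset (Fin n))) (p := fun p => f p = some bVal)
    have he : (Finset.univ.filter fun p => ¬ f p = some bVal)
        = (Finset.univ.filter fun p => f p = some aVal) := by
      apply Finset.filter_congr
      intro x _
      rcases hab x with h | h <;> simp [h, aVal, bVal]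
    rw [he] at hsplit
    have huc : (Finset.univ : Finset (Fin n)).card = n := by simp
    rw [huc] at hsplit
    have hkn : (k : ℝ) < n := by rw [hcard]; nlinarith
    have hknn : k < n := by exact_mod_cast hkn
    have hfa : (Finset.univ.filter fun p => f p = some aVal).card = n - k := by omega
    refine fires_core (A.rounds i) hu hu01.1 (ψ i) hn' f bVal aVal (by simp [aVal, bVal])
      k (n - k) ?_ ?_ (by omega) ?_ ?_ ?_ (hkey n hn)
    · rw [count_msetOf]
    · rw [count_msetOf, hfa]
    · rw [hcard]; nlinarith
    · intro t ht
      have htv : (ψ i).thrVal = t := by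
        rw [Option.mem_def] at ht; rw [RoundPred.thrVal, ht]; rfl
      have htc : t ≤ c := by rw [← htv]; exact hcV
      rw [hcard]; nlinarith
    · rw [hcard]; nlinarith
  · -- a side
    refine ⟨(1 - c) / 2, by linarith, fun θ hθ0 hθu => ⟨n₀, fun n hn f hf => ?_⟩⟩
    have hθc : θ < 1 - c := by linarith
    have hθ1 : θ < 1 := by linarith
    obtain ⟨hab, hcard⟩ := hf
    have hn' : 0 < n := lt_of_lt_of_le hn₀1 hn
    have hnR : (0 : ℝ) < n := by exact_mod_cast hn'
    set k : ℕ := (Finset.univ.filter fun p => f p = some bVal).card with hk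
    have hsplit := Finset.card_filter_add_card_filter_not
      (s := (Finset.univ : Finset (Fin n))) (p := fun p => f p = some bVal)
    have he : (Finset.univ.filter fun p => ¬ f p = some bVal)
        = (Finset.univ.filter fun p => f p = some aVal) := by
      apply Finset.filter_congr
      intro x _
      rcases hab x with h | h <;> simp [h, aVal, bVal]
    rw [he] at hsplit
    have huc : (Finset.univ : Finset (Fin n)).card = n := by simp
    rw [huc] at hsplit
    have hkn : (k : ℝ) < n := by rw [hcard]; nlinarith
    have hknn : k < n := by exact_mod_cast hkn
    have hk1 : 1 ≤ k := by
      by_contra h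
      have h0 : k = 0 := by omega
      rw [h0] at hcard
      simp at hcard
      rcases hcard with h1 | h1
      · linarith
      · omega
    have hfa : (Finset.univ.filter fun p => f p = some aVal).card = n - k := by omega
    have hnkR : ((n - k : ℕ) : ℝ) = (1 - θ) * n := by
      have : ((n - k : ℕ) : ℝ) = (n : ℝ) - k := by
        push_cast [Nat.cast_sub hknn.le]; ring
      rw [this, hcard]; ring
    refine fires_core (A.rounds i) hu hu01.1 (ψ i) hn' f aVal bVal (by simp [aVal, bVal])
      (n - k) k ?_ ?_ hk1 ?_ ?_ ?_ (hkey n hn)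
    · rw [count_msetOf, hfa]
    · rw [count_msetOf]
    · rw [hnkR]; nlinarith
    · intro t ht
      have htv : (ψ i).thrVal = t := by
        rw [Option.mem_def] at ht; rw [RoundPred.thrVal, ht]; rfl
      have htc : t ≤ c := by rw [← htv]; exact hcV
      rw [hnkR]; nlinarith
    · rw [hnkR]; nlinarith


end HO
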